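/- Let r, h > 0 with 2h < r·tanh(1), and let s₂ > 0 satisfy rs₂ = cosh(s₂h) and s₂h > 1. Then the area A(s₂) = (2π/s₂²)(s₂h + rs₂·tanh(s₂h)·cosh(s₂h)) of the unstable catenoid satisfies A(s₂) > 4πrh, i.e., it exceeds the area of the cylinder of radius r and height 2h. -/

import Mathlib

open Real

lemma tanh_mono {a b : ℝ} (hab : a < b) : Real.tanh a < Real.tanh b := by
  rw [Real.tanh_eq_sinh_div_cosh, Real.tanh_eq_sinh_div_cosh,
    div_lt_div_iff₀ (Real.cosh_pos a) (Real.cosh_pos b)]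
  have h := Real.sinh_pos_iff.mpr (sub_pos.mpr hab)
  rw [Real.sinh_sub] at h
  linarith

/-- If `2h < r·tanh 1` and `s₂ > 0` satisfies `r·s₂ = cosh(s₂h)` and `s₂h > 1`,
then the area `A(s₂) = (2π/s₂²)(s₂h + rs₂·tanh(s₂h)·cosh(s₂h))` of the unstable catenoid
exceeds the area `4πrh` of the cylinder. -/
theorem stmt5 (r h s₂ : ℝ) (hr : 0 < r) (hh : 0 < h) (hrh : 2 * h < r * Real.tanh 1)
    (hs₂ : 0 < s₂) (heq : r * s₂ = Real.cosh (s₂ * h)) (hgt : 1 < s₂ * h) :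
    4 * π * r * h
      < (2 * π / s₂ ^ 2) * (s₂ * h + r * s₂ * Real.tanh (s₂ * h) * Real.cosh (s₂ * h)) := by
  have ht : Real.tanh 1 < Real.tanh (s₂ * h) := tanh_mono hgt
  have hrhs : (2 * π / s₂ ^ 2) * (s₂ * h + r * s₂ * Real.tanh (s₂ * h) * Real.cosh (s₂ * h))
      = 2 * π * h / s₂ + 2 * π * r ^ 2 * Real.tanh (s₂ * h) := by
    rw [← heq]; field_simp
  rw [hrhs]
  have hpi := Real.pi_pos
  have h1 : 0 < 2 * π * h / s₂ := by positivity
  nlinarith [mul_pos hpi hr, mul_lt_mul_of_pos_left (lt_trans hrh (by nlinarith : r * Real.tanh 1 < r * Real.tanh (s₂ * h))) (mul_pos (mul_pos two_pos hpi) hr)]
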